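/- arXiv:1108.3777 — 2 statements merged into one kernel-verified Lean document; each statement's English description precedes it below -/
import Mathlib

section
/- Let L ⊴ G, φ ∈ Irr(L) invariant in G, and let ⟨·,·⟩_φ be the scalar form defined on pairs x, y ∈ G with [x,y] ∈ L. Then: (i) ⟨x₁x₂, y⟩ = ⟨x₁,y⟩⟨x₂,y⟩ whenever [x₁,y],[x₂,y] ∈ L; (ii) ⟨y,x⟩ = ⟨x,y⟩^{-1}; (iii) ⟨xl₁, yl₂⟩ = ⟨x,y⟩ for l₁, l₂ ∈ L; (iv) ⟨x^g, y^g⟩ = ⟨x,y⟩ for all g ∈ G. -/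
open MonoidAlgebra Finset
open scoped Classical

noncomputable section

namespace CF

variable {G : Type} [Group G] [Fintype G]

/-- A group element viewed in the complex group algebra. -/
def ι (g : G) : MonoidAlgebra ℂ G := MonoidAlgebra.single g 1

/-- The central idempotent of `ℂL` attached to an (irreducible) character `φ` of the
subgroup `L`, viewed inside the group algebra `ℂG`. -/
def eIdem (L : Subgroup G) (φ : ↥L → ℂ) : MonoidAlgebra ℂ G :=
  (φ 1 / (Fintype.card L : ℂ)) • ∑ l : L, MonoidAlgebra.single (l : G) (φ l⁻¹)

/-- `a` is supported on the subgroup `L`. -/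
def SuppIn (L : Subgroup G) (a : MonoidAlgebra ℂ G) : Prop := ∀ g : G, g ∉ L → a.coeff g = 0

/-- `a` lies in the corner `e_φ ℂG e_φ` determined by the idempotent `e_φ`. -/
def InCorner (L : Subgroup G) (φ : ↥L → ℂ) (a : MonoidAlgebra ℂ G) : Prop :=
  a * eIdem L φ = a ∧ eIdem L φ * a = a

/-- `c` is a unit of `ℂ L e_φ` (with inverse `c'`) inducing on `ℂ L e_φ` the
conjugation action of the element `x`. -/
def Induces (L : Subgroup G) (φ : ↥L → ℂ) (x : G) (c c' : MonoidAlgebra ℂ G) : Prop :=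
  SuppIn L c ∧ SuppIn L c' ∧ InCorner L φ c ∧ InCorner L φ c' ∧
  c * c' = eIdem L φ ∧ c' * c = eIdem L φ ∧
  ∀ a, SuppIn L a → InCorner L φ a → ι x⁻¹ * a * ι x = c' * a * c

/-- The Isaacs–Dade scalar `⟨x,y⟩_φ = z`, defined by `⟨x,y⟩_φ e_φ = [x,y][c_y,c_x]`. -/
def DadeScalar (L : Subgroup G) (φ : ↥L → ℂ) (x y : G) (z : ℂ) : Prop :=
  ∃ cx cx' cy cy', Induces L φ x cx cx' ∧ Induces L φ y cy cy' ∧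
    ι (x⁻¹ * y⁻¹ * x * y) * (cy' * cx' * cy * cx) = z • eIdem L φ

/-- `χ` is the character of an irreducible complex representation of `H`. -/
def IsIrrChar (H : Type) [Group H] (χ : H → ℂ) : Prop :=
  ∃ V : FDRep ℂ H, CategoryTheory.Simple V ∧ χ = V.character

/-- The usual inner product of complex-valued class functions on a finite group. -/
def innerChar (H : Type) [Group H] [Fintype H] (α β : H → ℂ) : ℂ :=
  (Fintype.card H : ℂ)⁻¹ * ∑ h : H, α h * (starRingEnd ℂ) (β h)

/-- `φ ∈ Irr L` is invariant under conjugation by all elements of `G`. -/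
def Invariant (L : Subgroup G) [hN : L.Normal] (φ : ↥L → ℂ) : Prop :=
  ∀ (g : G) (l : ↥L), φ ⟨g⁻¹ * l * g, by simpa [mul_assoc] using hN.conj_mem l l.2 g⁻¹⟩ = φ l

end CF
set_option linter.unusedSectionVars false
open CategoryTheory
namespace CF

variable {G : Type} [Group G] [Fintype G]

/-! ### Generic associativity helpers -/

lemma mr {M : Type*} [Semigroup M] {u v w : M} (h : u * v = w) (X : M) :
    u * (v * X) = w * X := by rw [← mul_assoc, h]

/-! ### Basic facts about `ι` -/

lemma ι_mul (g h : G) : (ι (g * h) : MonoidAlgebra ℂ G) = ι g * ι h := by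
  simp [ι, MonoidAlgebra.single_mul_single]

lemma ι_one : (ι (1 : G)) = (1 : MonoidAlgebra ℂ G) := rfl

lemma ι_inv_mul (g : G) : (ι g⁻¹) * ι g = (1 : MonoidAlgebra ℂ G) := by
  rw [← ι_mul, inv_mul_cancel, ι_one]

lemma ι_mul_inv (g : G) : (ι g) * ι g⁻¹ = (1 : MonoidAlgebra ℂ G) := by
  rw [← ι_mul, mul_inv_cancel, ι_one]

lemma ι_inv_mul_cancel (g : G) (X : MonoidAlgebra ℂ G) : ι g⁻¹ * (ι g * X) = X := by
  rw [mr (ι_inv_mul g), one_mul]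

lemma ι_mul_inv_cancel (g : G) (X : MonoidAlgebra ℂ G) : ι g * (ι g⁻¹ * X) = X := by
  rw [mr (ι_mul_inv g), one_mul]

lemma cancel_left (g : G) {A B : MonoidAlgebra ℂ G} (h : ι g * A = ι g * B) : A = B := by
  have h2 := congrArg (fun t => ι g⁻¹ * t) h
  simpa only [ι_inv_mul_cancel] using h2

lemma cancel_right (g : G) {A B : MonoidAlgebra ℂ G} (h : A * ι g = B * ι g) : A = B := by
  have h2 := congrArg (fun t => t * ι g⁻¹) h
  simpa only [mul_assoc, ι_mul_inv, mul_one] using h2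

/-! ### Support lemmas -/

lemma suppIn_mul {L : Subgroup G} {a b : MonoidAlgebra ℂ G} (ha : SuppIn L a)
    (hb : SuppIn L b) : SuppIn L (a * b) := by
  intro g hg
  rw [MonoidAlgebra.mul_apply]
  apply Finset.sum_eq_zero
  intro x hx
  apply Finset.sum_eq_zero
  intro y hy
  simp only []
  rw [if_neg]
  intro hxy
  by_cases hxL : x ∈ L
  · by_cases hyL : y ∈ L
    · exact hg (hxy ▸ L.mul_mem hxL hyL)
    · exact (Finsupp.mem_support_iff.mp hy) (hb y hyL)
  · exact (Finsupp.mem_support_iff.mp hx) (ha x hxL)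

lemma suppIn_ι {L : Subgroup G} {l : G} (hl : l ∈ L) : SuppIn L (ι l) := by
  intro g hg
  rw [ι, MonoidAlgebra.single_apply, if_neg]
  rintro rfl; exact hg hl

lemma suppIn_conj {L : Subgroup G} [hN : L.Normal] {a : MonoidAlgebra ℂ G}
    (ha : SuppIn L a) (g : G) : SuppIn L (ι g⁻¹ * a * ι g) := by
  intro h hh
  simp only [ι, mul_assoc]
  rw [MonoidAlgebra.single_mul_apply, inv_inv, MonoidAlgebra.mul_single_apply]
  rw [ha (g * h * g⁻¹), zero_mul, mul_zero]
  intro hmem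
  exact hh (by simpa [mul_assoc] using hN.conj_mem _ hmem g⁻¹)

/-! ### The idempotent -/

def conjEquiv (L : Subgroup G) [hN : L.Normal] (g : G) : ↥L ≃ ↥L where
  toFun l := ⟨g⁻¹ * l * g, by simpa [mul_assoc] using hN.conj_mem l l.2 g⁻¹⟩
  invFun l := ⟨g * l * g⁻¹, hN.conj_mem l l.2 g⟩
  left_inv l := by ext; simp [mul_assoc]
  right_inv l := by ext; simp [mul_assoc]

lemma e_comm {L : Subgroup G} [hN : L.Normal] {φ : ↥L → ℂ} (hinv : Invariant L φ) (g : G) :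
    ι g * eIdem L φ = eIdem L φ * ι g := by
  rw [eIdem, mul_smul_comm, smul_mul_assoc, Finset.mul_sum, Finset.sum_mul]
  congr 1
  refine Fintype.sum_equiv (conjEquiv L g).symm _ _ ?_
  intro l
  show (ι g : MonoidAlgebra ℂ G) * MonoidAlgebra.single (↑l : G) (φ l⁻¹)
      = MonoidAlgebra.single (↑((conjEquiv L g).symm l) : G) (φ ((conjEquiv L g).symm l)⁻¹) * ι g
  rw [ι, MonoidAlgebra.single_mul_single, MonoidAlgebra.single_mul_single, one_mul, mul_one]
  have h1 : (↑((conjEquiv L g).symm l) : G) * g = g * ↑l := by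
    show (g * ↑l * g⁻¹) * g = g * ↑l
    group
  have h2 : φ ((conjEquiv L g).symm l)⁻¹ = φ l⁻¹ := by
    have h3 : ((conjEquiv L g).symm l)⁻¹ = ⟨(g⁻¹)⁻¹ * ↑(l⁻¹) * g⁻¹, by
      simpa [mul_assoc] using hN.conj_mem _ (l⁻¹).2 (g⁻¹)⁻¹⟩ := by
      ext
      show (g * ↑l * g⁻¹)⁻¹ = (g⁻¹)⁻¹ * ↑(l⁻¹) * g⁻¹
      simp [mul_assoc]
    rw [h3, hinv g⁻¹ l⁻¹]
  rw [h1, h2]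

lemma irr_one_ne_zero {H : Type} [Group H] {χ : H → ℂ} (h : IsIrrChar H χ) : χ 1 ≠ 0 := by
  obtain ⟨V, hs, rfl⟩ := h
  rw [FDRep.char_one]
  have hfr : Module.finrank ℂ V ≠ 0 := by
    intro h0
    haveI : Subsingleton V := Module.finrank_zero_iff.mp h0
    have h4 : 𝟙 V = (0 : CategoryTheory.End V) := by
      apply Action.Hom.ext
      ext v
      exact Subsingleton.elim _ _
    exact CategoryTheory.id_nonzero V h4
  exact Nat.cast_ne_zero.mpr hfr

lemma e_apply_one (L : Subgroup G) (φ : ↥L → ℂ) :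
    (eIdem L φ).coeff 1 = φ 1 / (Fintype.card L : ℂ) * φ 1 := by
  rw [eIdem, MonoidAlgebra.coeff_smul_apply, MonoidAlgebra.coeff_sum, Finset.sum_apply']
  congr 1
  rw [Finset.sum_eq_single (1 : ↥L)]
  · simp
  · intro l _ hl
    rw [MonoidAlgebra.single_apply, if_neg]
    intro h
    exact hl (by ext; exact h)
  · simp

lemma e_ne_zero (L : Subgroup G) (φ : ↥L → ℂ) (h : IsIrrChar ↥L φ) : eIdem L φ ≠ 0 := by
  intro h0
  have h1 : (eIdem L φ).coeff 1 = 0 := by rw [h0]; rfl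
  rw [e_apply_one] at h1
  have hc : (Fintype.card ↥L : ℂ) ≠ 0 := Nat.cast_ne_zero.mpr Fintype.card_ne_zero
  have hφ := irr_one_ne_zero h
  field_simp at h1
  exact hφ (pow_eq_zero_iff two_ne_zero |>.mp (by simpa using h1))

end CF
set_option linter.unusedSectionVars false
namespace CF

variable {G : Type} [Group G] [Fintype G] {L : Subgroup G} [hN : L.Normal] {φ : ↥L → ℂ}

/-! ### Conjugation-move lemmas -/

lemma conj_move {y : G} {b b' : MonoidAlgebra ℂ G} (hy : Induces L φ y b b')
    {a : MonoidAlgebra ℂ G} (ha : SuppIn L a) (hca : InCorner L φ a) :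
    a * ι y = ι y * (b' * (a * b)) := by
  have h1 := hy.2.2.2.2.2.2 a ha hca
  calc a * ι y = (ι y * ι y⁻¹) * a * ι y := by rw [ι_mul_inv, one_mul]
    _ = ι y * (ι y⁻¹ * a * ι y) := by simp only [mul_assoc]
    _ = ι y * (b' * a * b) := by rw [h1]
    _ = ι y * (b' * (a * b)) := by simp only [mul_assoc]

lemma conj_moveX {y : G} {b b' : MonoidAlgebra ℂ G} (hy : Induces L φ y b b')
    {a : MonoidAlgebra ℂ G} (ha : SuppIn L a) (hca : InCorner L φ a) (X : MonoidAlgebra ℂ G) :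
    a * (ι y * X) = ι y * (b' * (a * (b * X))) := by
  calc a * (ι y * X) = (a * ι y) * X := by simp only [mul_assoc]
    _ = (ι y * (b' * (a * b))) * X := by rw [conj_move hy ha hca]
    _ = ι y * (b' * (a * (b * X))) := by simp only [mul_assoc]

lemma conj_move' {x : G} {c c' : MonoidAlgebra ℂ G} (hx : Induces L φ x c c')
    {a : MonoidAlgebra ℂ G} (ha : SuppIn L a) (hca : InCorner L φ a) :
    c * (ι x⁻¹ * a) = a * (c * ι x⁻¹) := by
  have h1 := hx.2.2.2.2.2.2 a ha hca
  have h2 : ι x⁻¹ * a = c' * a * c * ι x⁻¹ := by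
    calc ι x⁻¹ * a = (ι x⁻¹ * a * ι x) * ι x⁻¹ := by
          rw [mul_assoc, mul_assoc, ι_mul_inv, mul_one]
      _ = c' * a * c * ι x⁻¹ := by rw [h1]
  calc c * (ι x⁻¹ * a) = c * (c' * a * c * ι x⁻¹) := by rw [h2]
    _ = (c * c') * (a * (c * ι x⁻¹)) := by simp only [mul_assoc]
    _ = eIdem L φ * (a * (c * ι x⁻¹)) := by rw [hx.2.2.2.2.1]
    _ = (eIdem L φ * a) * (c * ι x⁻¹) := by simp only [mul_assoc]
    _ = a * (c * ι x⁻¹) := by rw [hca.2]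

lemma conj_move'X {x : G} {c c' : MonoidAlgebra ℂ G} (hx : Induces L φ x c c')
    {a : MonoidAlgebra ℂ G} (ha : SuppIn L a) (hca : InCorner L φ a) (X : MonoidAlgebra ℂ G) :
    c * (ι x⁻¹ * (a * X)) = a * (c * (ι x⁻¹ * X)) := by
  calc c * (ι x⁻¹ * (a * X)) = (c * (ι x⁻¹ * a)) * X := by simp only [mul_assoc]
    _ = (a * (c * ι x⁻¹)) * X := by rw [conj_move' hx ha hca]
    _ = a * (c * (ι x⁻¹ * X)) := by simp only [mul_assoc]

/-- Two units inducing the conjugation action of the same element commute in the corner. -/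
lemma induces_comm {x : G} {c c' d d' : MonoidAlgebra ℂ G}
    (h1 : Induces L φ x c c') (h2 : Induces L φ x d d')
    {a : MonoidAlgebra ℂ G} (ha : SuppIn L a) (hca : InCorner L φ a) :
    d * (c' * a) = a * (d * c') := by
  have e1 := h1.2.2.2.2.2.2 a ha hca
  have e2 := h2.2.2.2.2.2.2 a ha hca
  have e3 : c' * (a * c) = d' * (a * d) := by
    rw [← mul_assoc, ← e1, e2, mul_assoc]
  calc d * (c' * a)
      = d * (c' * (a * eIdem L φ)) := by rw [hca.1]
    _ = d * (c' * (a * (c * c'))) := by rw [← h1.2.2.2.2.1]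
    _ = d * ((c' * (a * c)) * c') := by simp only [mul_assoc]
    _ = d * ((d' * (a * d)) * c') := by rw [e3]
    _ = (d * d') * (a * (d * c')) := by simp only [mul_assoc]
    _ = eIdem L φ * (a * (d * c')) := by rw [h2.2.2.2.2.1]
    _ = (eIdem L φ * a) * (d * c') := by simp only [mul_assoc]
    _ = a * (d * c') := by rw [hca.2]

lemma induces_commX {x : G} {c c' d d' : MonoidAlgebra ℂ G}
    (h1 : Induces L φ x c c') (h2 : Induces L φ x d d')
    {a : MonoidAlgebra ℂ G} (ha : SuppIn L a) (hca : InCorner L φ a) (X : MonoidAlgebra ℂ G) :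
    d * (c' * (a * X)) = a * (d * (c' * X)) := by
  calc d * (c' * (a * X)) = (d * (c' * a)) * X := by simp only [mul_assoc]
    _ = (a * (d * c')) * X := by rw [induces_comm h1 h2 ha hca]
    _ = a * (d * (c' * X)) := by simp only [mul_assoc]

/-! ### Constructions of inducing units -/

lemma induces_mul {x₁ x₂ : G} {c₁ c₁' c₂ c₂' : MonoidAlgebra ℂ G}
    (h1 : Induces L φ x₁ c₁ c₁') (h2 : Induces L φ x₂ c₂ c₂') :
    Induces L φ (x₁ * x₂) (c₁ * c₂) (c₂' * c₁') := by
  obtain ⟨s1, s1', ⟨k1a, k1b⟩, ⟨k1a', k1b'⟩, m1, m1', j1⟩ := h1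
  obtain ⟨s2, s2', ⟨k2a, k2b⟩, ⟨k2a', k2b'⟩, m2, m2', j2⟩ := h2
  refine ⟨suppIn_mul s1 s2, suppIn_mul s2' s1', ⟨?_, ?_⟩, ⟨?_, ?_⟩, ?_, ?_, ?_⟩
  · rw [mul_assoc, k2a]
  · rw [← mul_assoc, k1b]
  · rw [mul_assoc, k1a']
  · rw [← mul_assoc, k2b']
  · rw [mul_assoc, ← mul_assoc c₂, m2, k1b', m1]
  · rw [mul_assoc, ← mul_assoc c₁', m1', k2b, m2']
  · intro a ha hca
    have hs : SuppIn L (c₁' * a * c₁) := suppIn_mul (suppIn_mul s1' ha) s1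
    have hcr : InCorner L φ (c₁' * a * c₁) := by
      constructor
      · rw [mul_assoc, mul_assoc, k1a, ← mul_assoc]
      · rw [← mul_assoc, ← mul_assoc, k1b']
    have hstep := j1 a ha hca
    have hstep2 := j2 _ hs hcr
    calc ι (x₁ * x₂)⁻¹ * a * ι (x₁ * x₂)
        = ι x₂⁻¹ * (ι x₁⁻¹ * a * ι x₁) * ι x₂ := by
          rw [mul_inv_rev, ι_mul, ι_mul x₁ x₂]; simp only [mul_assoc]
      _ = ι x₂⁻¹ * (c₁' * a * c₁) * ι x₂ := by rw [hstep]
      _ = c₂' * (c₁' * a * c₁) * c₂ := hstep2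
      _ = (c₂' * c₁') * a * (c₁ * c₂) := by simp only [mul_assoc]

lemma induces_mul_l (hinv : Invariant L φ) {x : G} {c c' : MonoidAlgebra ℂ G}
    (h : Induces L φ x c c') (l : ↥L) :
    Induces L φ (x * ↑l) (c * ι (↑l : G)) (ι ((↑l : G))⁻¹ * c') := by
  obtain ⟨s, s', ⟨ka, kb⟩, ⟨ka', kb'⟩, m, m', j⟩ := h
  refine ⟨suppIn_mul s (suppIn_ι l.2), suppIn_mul (suppIn_ι (L.inv_mem l.2)) s',
    ⟨?_, ?_⟩, ⟨?_, ?_⟩, ?_, ?_, ?_⟩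
  · calc c * ι (↑l : G) * eIdem L φ = c * (ι (↑l : G) * eIdem L φ) := mul_assoc _ _ _
      _ = c * (eIdem L φ * ι (↑l : G)) := by rw [e_comm hinv]
      _ = (c * eIdem L φ) * ι (↑l : G) := (mul_assoc _ _ _).symm
      _ = c * ι (↑l : G) := by rw [ka]
  · rw [← mul_assoc, kb]
  · rw [mul_assoc, ka']
  · calc eIdem L φ * (ι ((↑l : G))⁻¹ * c') = (eIdem L φ * ι ((↑l : G))⁻¹) * c' := (mul_assoc _ _ _).symm
      _ = (ι ((↑l : G))⁻¹ * eIdem L φ) * c' := by rw [← e_comm hinv]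
      _ = ι ((↑l : G))⁻¹ * (eIdem L φ * c') := mul_assoc _ _ _
      _ = ι ((↑l : G))⁻¹ * c' := by rw [kb']
  · rw [mul_assoc, ← mul_assoc (ι (↑l : G)), ι_mul_inv, one_mul, m]
  · rw [mul_assoc, ← mul_assoc c', m', ← e_comm hinv, ← mul_assoc, ι_inv_mul, one_mul]
  · intro a ha hca
    have hstep := j a ha hca
    calc ι (x * ↑l)⁻¹ * a * ι (x * ↑l)
        = ι (↑l : G)⁻¹ * (ι x⁻¹ * a * ι x) * ι (↑l : G) := by
          rw [mul_inv_rev, ι_mul, ι_mul x]; simp only [mul_assoc]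
      _ = ι (↑l : G)⁻¹ * (c' * a * c) * ι (↑l : G) := by rw [hstep]
      _ = (ι (↑l : G)⁻¹ * c') * a * (c * ι (↑l : G)) := by simp only [mul_assoc]

lemma induces_conj (hinv : Invariant L φ) {x : G} {c c' : MonoidAlgebra ℂ G}
    (h : Induces L φ x c c') (g : G) :
    Induces L φ (g⁻¹ * x * g) (ι g⁻¹ * c * ι g) (ι g⁻¹ * c' * ι g) := by
  obtain ⟨s, s', ⟨ka, kb⟩, ⟨ka', kb'⟩, m, m', j⟩ := h
  refine ⟨suppIn_conj s g, suppIn_conj s' g, ⟨?_, ?_⟩, ⟨?_, ?_⟩, ?_, ?_, ?_⟩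
  · calc ι g⁻¹ * c * ι g * eIdem L φ = ι g⁻¹ * (c * (ι g * eIdem L φ)) := by
          simp only [mul_assoc]
      _ = ι g⁻¹ * (c * (eIdem L φ * ι g)) := by rw [e_comm hinv]
      _ = ι g⁻¹ * ((c * eIdem L φ) * ι g) := by simp only [mul_assoc]
      _ = ι g⁻¹ * c * ι g := by rw [ka, ← mul_assoc]
  · calc eIdem L φ * (ι g⁻¹ * c * ι g) = (eIdem L φ * ι g⁻¹) * (c * ι g) := by
          simp only [mul_assoc]
      _ = (ι g⁻¹ * eIdem L φ) * (c * ι g) := by rw [← e_comm hinv]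
      _ = ι g⁻¹ * ((eIdem L φ * c) * ι g) := by simp only [mul_assoc]
      _ = ι g⁻¹ * c * ι g := by rw [kb, ← mul_assoc]
  · calc ι g⁻¹ * c' * ι g * eIdem L φ = ι g⁻¹ * (c' * (ι g * eIdem L φ)) := by
          simp only [mul_assoc]
      _ = ι g⁻¹ * (c' * (eIdem L φ * ι g)) := by rw [e_comm hinv]
      _ = ι g⁻¹ * ((c' * eIdem L φ) * ι g) := by simp only [mul_assoc]
      _ = ι g⁻¹ * c' * ι g := by rw [ka', ← mul_assoc]
  · calc eIdem L φ * (ι g⁻¹ * c' * ι g) = (eIdem L φ * ι g⁻¹) * (c' * ι g) := by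
          simp only [mul_assoc]
      _ = (ι g⁻¹ * eIdem L φ) * (c' * ι g) := by rw [← e_comm hinv]
      _ = ι g⁻¹ * ((eIdem L φ * c') * ι g) := by simp only [mul_assoc]
      _ = ι g⁻¹ * c' * ι g := by rw [kb', ← mul_assoc]
  · calc (ι g⁻¹ * c * ι g) * (ι g⁻¹ * c' * ι g)
        = ι g⁻¹ * (c * ((ι g * ι g⁻¹) * (c' * ι g))) := by simp only [mul_assoc]
      _ = ι g⁻¹ * (c * (c' * ι g)) := by rw [ι_mul_inv, one_mul]
      _ = ι g⁻¹ * ((c * c') * ι g) := by simp only [mul_assoc]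
      _ = ι g⁻¹ * (eIdem L φ * ι g) := by rw [m]
      _ = ι g⁻¹ * (ι g * eIdem L φ) := by rw [e_comm hinv]
      _ = eIdem L φ := ι_inv_mul_cancel g _
  · calc (ι g⁻¹ * c' * ι g) * (ι g⁻¹ * c * ι g)
        = ι g⁻¹ * (c' * ((ι g * ι g⁻¹) * (c * ι g))) := by simp only [mul_assoc]
      _ = ι g⁻¹ * (c' * (c * ι g)) := by rw [ι_mul_inv, one_mul]
      _ = ι g⁻¹ * ((c' * c) * ι g) := by simp only [mul_assoc]
      _ = ι g⁻¹ * (eIdem L φ * ι g) := by rw [m']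
      _ = ι g⁻¹ * (ι g * eIdem L φ) := by rw [e_comm hinv]
      _ = eIdem L φ := ι_inv_mul_cancel g _
  · intro a ha hca
    have hs2 : SuppIn L (ι g * a * ι g⁻¹) := by
      have := suppIn_conj ha g⁻¹
      rwa [inv_inv] at this
    have hc2 : InCorner L φ (ι g * a * ι g⁻¹) := by
      constructor
      · calc ι g * a * ι g⁻¹ * eIdem L φ = ι g * (a * (ι g⁻¹ * eIdem L φ)) := by
              simp only [mul_assoc]
          _ = ι g * (a * (eIdem L φ * ι g⁻¹)) := by rw [e_comm hinv]
          _ = ι g * ((a * eIdem L φ) * ι g⁻¹) := by simp only [mul_assoc]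
          _ = ι g * a * ι g⁻¹ := by rw [hca.1, ← mul_assoc]
      · calc eIdem L φ * (ι g * a * ι g⁻¹) = (eIdem L φ * ι g) * (a * ι g⁻¹) := by
              simp only [mul_assoc]
          _ = (ι g * eIdem L φ) * (a * ι g⁻¹) := by rw [← e_comm hinv]
          _ = ι g * ((eIdem L φ * a) * ι g⁻¹) := by simp only [mul_assoc]
          _ = ι g * a * ι g⁻¹ := by rw [hca.2, ← mul_assoc]
    have hstep := j _ hs2 hc2
    calc ι (g⁻¹ * x * g)⁻¹ * a * ι (g⁻¹ * x * g)
        = ι g⁻¹ * (ι x⁻¹ * (ι g * a * ι g⁻¹) * ι x) * ι g := by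
          simp only [mul_inv_rev, inv_inv, ι_mul]
          simp only [mul_assoc]
      _ = ι g⁻¹ * (c' * (ι g * a * ι g⁻¹) * c) * ι g := by rw [hstep]
      _ = (ι g⁻¹ * c' * ι g) * a * (ι g⁻¹ * c * ι g) := by simp only [mul_assoc]

end CF
set_option linter.unusedSectionVars false
namespace CF

variable {G : Type} [Group G] [Fintype G] {L : Subgroup G} [hN : L.Normal] {φ : ↥L → ℂ}

/-- Step 1 of witness independence: changing the unit for `x`. -/
lemma lemA_x {x y : G} {c c' d d' b b' : MonoidAlgebra ℂ G}
    (h1 : Induces L φ x c c') (h2 : Induces L φ x d d') (hy : Induces L φ y b b') :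
    b' * (d' * (b * d)) = b' * (c' * (b * c)) := by
  have hbS : SuppIn L b := hy.1
  have hbC : InCorner L φ b := hy.2.2.1
  have hd'eq : c' * (c * d') = d' := by
    rw [← mul_assoc, h1.2.2.2.2.2.1, (h2.2.2.2.1).2]
  calc b' * (d' * (b * d))
      = b' * ((c' * (c * d')) * (b * d)) := by rw [hd'eq]
    _ = b' * (c' * (c * (d' * (b * d)))) := by simp only [mul_assoc]
    _ = b' * (c' * (b * (c * (d' * d)))) := by rw [induces_commX h2 h1 hbS hbC]
    _ = b' * (c' * (b * (c * eIdem L φ))) := by rw [h2.2.2.2.2.2.1]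
    _ = b' * (c' * (b * c)) := by rw [(h1.2.2.1).1]

/-- Step 2 of witness independence: changing the unit for `y`. -/
lemma lemA_y {x y : G} {b b' f f' d d' : MonoidAlgebra ℂ G}
    (hy1 : Induces L φ y b b') (hy2 : Induces L φ y f f') (hx : Induces L φ x d d') :
    f' * (d' * (f * d)) = b' * (d' * (b * d)) := by
  have hd'S : SuppIn L d' := hx.2.1
  have hd'C : InCorner L φ d' := hx.2.2.2.1
  have hf'eq : b' * (b * f') = f' := by
    rw [← mul_assoc, hy1.2.2.2.2.2.1, (hy2.2.2.2.1).2]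
  calc f' * (d' * (f * d))
      = (b' * (b * f')) * (d' * (f * d)) := by rw [hf'eq]
    _ = b' * (b * (f' * (d' * (f * d)))) := by simp only [mul_assoc]
    _ = b' * (d' * (b * (f' * (f * d)))) := by rw [induces_commX hy2 hy1 hd'S hd'C]
    _ = b' * (d' * (b * (eIdem L φ * d))) := by rw [mr hy2.2.2.2.2.2.1]
    _ = b' * (d' * (b * d)) := by rw [(hx.2.2.1).2]

/-- Witness independence of the Isaacs–Dade equation. -/
lemma lemA {x y : G} {c c' d d' b b' f f' : MonoidAlgebra ℂ G}
    (h1 : Induces L φ x c c') (h2 : Induces L φ x d d')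
    (hy1 : Induces L φ y b b') (hy2 : Induces L φ y f f') {l : G} {z : ℂ}
    (h : ι l * (b' * (c' * (b * c))) = z • eIdem L φ) :
    ι l * (f' * (d' * (f * d))) = z • eIdem L φ := by
  rw [lemA_y hy1 hy2 h2, lemA_x h1 h2 hy1]
  exact h

/-- The fundamental identity relating the Dade expression with the `N`-form. -/
lemma FId {x y : G} {c c' b b' : MonoidAlgebra ℂ G}
    (hx : Induces L φ x c c') (hy : Induces L φ y b b') :
    ι x * (c' * (ι y * (b' * (c * (ι x⁻¹ * (b * ι y⁻¹))))))
      = ι (y * x) * ((ι (x⁻¹ * y⁻¹ * x * y) * (b' * (c' * (b * c)))) * ι (x⁻¹ * y⁻¹)) := by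
  have hc'S : SuppIn L c' := hx.2.1
  have hc'C : InCorner L φ c' := hx.2.2.2.1
  have hbS : SuppIn L b := hy.1
  have hbC : InCorner L φ b := hy.2.2.1
  have hg : (y * x) * (x⁻¹ * y⁻¹ * x * y) = x * y := by group
  calc ι x * (c' * (ι y * (b' * (c * (ι x⁻¹ * (b * ι y⁻¹))))))
      = ι x * (ι y * (b' * (c' * (b * (b' * (c * (ι x⁻¹ * (b * ι y⁻¹)))))))) := by
        rw [conj_moveX hy hc'S hc'C]
    _ = ι x * (ι y * (b' * (c' * (eIdem L φ * (c * (ι x⁻¹ * (b * ι y⁻¹))))))) := by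
        rw [mr hy.2.2.2.2.1]
    _ = ι x * (ι y * (b' * (c' * (c * (ι x⁻¹ * (b * ι y⁻¹)))))) := by
        rw [mr (hx.2.2.2.1).1]
    _ = ι x * (ι y * (b' * (c' * (b * (c * (ι x⁻¹ * ι y⁻¹)))))) := by
        rw [conj_move'X hx hbS hbC]
    _ = (ι x * ι y) * (b' * (c' * (b * (c * ι (x⁻¹ * y⁻¹))))) := by
        rw [← ι_mul]; simp only [mul_assoc]
    _ = ι ((y * x) * (x⁻¹ * y⁻¹ * x * y)) * (b' * (c' * (b * (c * ι (x⁻¹ * y⁻¹))))) := by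
        rw [← ι_mul, hg]
    _ = ι (y * x) * ((ι (x⁻¹ * y⁻¹ * x * y) * (b' * (c' * (b * c)))) * ι (x⁻¹ * y⁻¹)) := by
        rw [ι_mul]; simp only [mul_assoc]

lemma F_forward (hinv : Invariant L φ) {x y : G} {c c' b b' : MonoidAlgebra ℂ G} {z : ℂ}
    (hx : Induces L φ x c c') (hy : Induces L φ y b b') {l : G}
    (h : ι l * (b' * (c' * (b * c))) = z • eIdem L φ) (hl : l = x⁻¹ * y⁻¹ * x * y) :
    ι x * (c' * (ι y * (b' * (c * (ι x⁻¹ * (b * ι y⁻¹)))))) = z • eIdem L φ := by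
  subst hl
  rw [FId hx hy, h]
  calc ι (y * x) * ((z • eIdem L φ) * ι (x⁻¹ * y⁻¹))
      = z • (ι (y * x) * (eIdem L φ * ι (x⁻¹ * y⁻¹))) := by
        rw [smul_mul_assoc, mul_smul_comm]
    _ = z • (ι (y * x) * (ι (x⁻¹ * y⁻¹) * eIdem L φ)) := by rw [e_comm hinv]
    _ = z • ((ι (y * x) * ι (x⁻¹ * y⁻¹)) * eIdem L φ) := by rw [mul_assoc]
    _ = z • (ι ((y * x) * (x⁻¹ * y⁻¹)) * eIdem L φ) := by rw [← ι_mul]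
    _ = z • eIdem L φ := by
        rw [show (y * x) * (x⁻¹ * y⁻¹) = 1 by group, ι_one, one_mul]

lemma F_backward (hinv : Invariant L φ) {x y : G} {c c' b b' : MonoidAlgebra ℂ G} {z : ℂ}
    (hx : Induces L φ x c c') (hy : Induces L φ y b b')
    (h : ι x * (c' * (ι y * (b' * (c * (ι x⁻¹ * (b * ι y⁻¹)))))) = z • eIdem L φ)
    {l : G} (hl : l = x⁻¹ * y⁻¹ * x * y) :
    ι l * (b' * (c' * (b * c))) = z • eIdem L φ := by
  subst hl
  have h2 : ι (y * x) * ((ι (x⁻¹ * y⁻¹ * x * y) * (b' * (c' * (b * c)))) * ι (x⁻¹ * y⁻¹))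
      = z • eIdem L φ := by rw [← FId hx hy]; exact h
  have h4 := congrArg (fun t => ι (y * x)⁻¹ * t) h2
  rw [ι_inv_mul_cancel] at h4
  rw [mul_smul_comm, e_comm hinv, ← smul_mul_assoc, mul_inv_rev] at h4
  exact cancel_right _ h4

lemma smul_cancel {z w : ℂ} {v : MonoidAlgebra ℂ G} (hv : v ≠ 0) (h : z • v = w • v) :
    z = w := smul_left_injective ℂ hv h

end CF
open CF

set_option maxHeartbeats 1000000 in
/-- Lemma 2.1 of Ladisch: basic properties of the Isaacs–Dade form. -/
theorem stmt1 {G : Type} [Group G] [Fintype G] (L : Subgroup G) [L.Normal]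
    (φ : ↥L → ℂ) (hφirr : IsIrrChar ↥L φ) (hφinv : Invariant L φ) :
    -- (i) ⟨x₁x₂, y⟩ = ⟨x₁,y⟩⟨x₂,y⟩
    (∀ x₁ x₂ y : G, x₁⁻¹ * y⁻¹ * x₁ * y ∈ L → x₂⁻¹ * y⁻¹ * x₂ * y ∈ L →
      ∀ z₁ z₂ z : ℂ, DadeScalar L φ x₁ y z₁ → DadeScalar L φ x₂ y z₂ →
        DadeScalar L φ (x₁ * x₂) y z → z = z₁ * z₂) ∧
    -- (ii) ⟨y,x⟩ = ⟨x,y⟩⁻¹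
    (∀ x y : G, x⁻¹ * y⁻¹ * x * y ∈ L →
      ∀ z w : ℂ, DadeScalar L φ x y z → DadeScalar L φ y x w → z * w = 1) ∧
    -- (iii) ⟨x l₁, y l₂⟩ = ⟨x,y⟩
    (∀ (x y : G) (l₁ l₂ : ↥L), x⁻¹ * y⁻¹ * x * y ∈ L →
      ∀ z : ℂ, DadeScalar L φ x y z → DadeScalar L φ (x * l₁) (y * l₂) z) ∧
    -- (iv) ⟨x^g, y^g⟩ = ⟨x,y⟩
    (∀ x y g : G, x⁻¹ * y⁻¹ * x * y ∈ L →
      ∀ z : ℂ, DadeScalar L φ x y z →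
        DadeScalar L φ (g⁻¹ * x * g) (g⁻¹ * y * g) z) := by
  refine ⟨?_, ?_, ?_, ?_⟩
  · -- (i)
    intro x₁ x₂ y hx₁L hx₂L z₁ z₂ z hz₁ hz₂ hz
    obtain ⟨c₁, c₁', b₁, b₁', hc₁, hb₁, heq₁⟩ := hz₁
    obtain ⟨c₂, c₂', b₂, b₂', hc₂, hb₂, heq₂⟩ := hz₂
    obtain ⟨d, d', f, f', hd, hf, heqd⟩ := hz
    simp only [mul_assoc] at heq₁ heq₂ heqd
    have heq₂' := lemA hc₂ hc₂ hb₂ hb₁ heq₂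
    have hcc := induces_mul hc₁ hc₂
    have heqd' := lemA hd hcc hf hb₁ heqd
    have N₁ := F_forward hφinv hc₁ hb₁ heq₁ (by group)
    have N₂ := F_forward hφinv hc₂ hb₁ heq₂' (by group)
    have Nd := F_forward hφinv hcc hb₁ heqd' (by group)
    simp only [mul_inv_rev, ι_mul, mul_assoc] at Nd
    have I1 : ι x₁ * (c₁' * (ι x₂ * (c₂' * (ι y * (b₁' * (c₂ * (ι x₂⁻¹ * (c₁ *
          (ι x₁⁻¹ * (b₁ * ι y⁻¹))))))))))
        = ι x₁ * (ι x₂ * (c₂' * (c₁' * (ι y * (b₁' * (c₁ * (c₂ * (ι x₂⁻¹ *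
          (ι x₁⁻¹ * (b₁ * ι y⁻¹)))))))))) := by
      rw [conj_moveX hc₂ hc₁.2.1 hc₁.2.2.2.1, mr hc₂.2.2.2.2.1, mr (hc₁.2.2.2.1).1,
        conj_move'X hc₂ hc₁.1 hc₁.2.2.1]
    have Hd := I1.trans Nd
    have h5 := congrArg (fun t => t * (ι y * b₁')) N₂
    simp only [smul_mul_assoc, mul_assoc] at h5
    rw [ι_inv_mul_cancel] at h5
    rw [hb₁.2.2.2.2.1] at h5
    rw [e_comm hφinv] at h5
    rw [mr (hc₂.2.2.1).1] at h5
    have hEy : eIdem L φ * (ι y * b₁') = ι y * b₁' := by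
      rw [← mul_assoc, ← e_comm hφinv, mul_assoc, (hb₁.2.2.2.1).2]
    rw [hEy] at h5
    have h6 := congrArg (fun t => t * (c₁ * (ι x₁⁻¹ * (b₁ * ι y⁻¹)))) h5
    simp only [smul_mul_assoc, mul_assoc] at h6
    rw [h6] at Hd
    rw [mul_smul_comm, mul_smul_comm] at Hd
    rw [N₁, smul_smul] at Hd
    have hzz := smul_cancel (e_ne_zero L φ hφirr) Hd
    exact hzz.symm.trans (mul_comm z₂ z₁)
  · -- (ii)
    intro x y hL z w hz hw
    obtain ⟨c, c', b, b', hc, hb, heq⟩ := hz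
    obtain ⟨u, u', v, v', hu, hv, heqw⟩ := hw
    simp only [mul_assoc] at heq heqw
    have heqw' := lemA hu hb hv hc heqw
    have hPQ : b' * (c' * (b * (c * (c' * (b' * (c * b)))))) = eIdem L φ := by
      calc b' * (c' * (b * (c * (c' * (b' * (c * b))))))
          = b' * (c' * (b * (eIdem L φ * (b' * (c * b))))) := by rw [mr hc.2.2.2.2.1]
        _ = b' * (c' * (b * (b' * (c * b)))) := by rw [mr (hb.2.2.2.1).2]
        _ = b' * (c' * (eIdem L φ * (c * b))) := by rw [mr hb.2.2.2.2.1]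
        _ = b' * (c' * (c * b)) := by rw [mr (hc.2.2.1).2]
        _ = b' * (eIdem L φ * b) := by rw [mr hc.2.2.2.2.2.1]
        _ = b' * b := by rw [(hb.2.2.1).2]
        _ = eIdem L φ := hb.2.2.2.2.2.1
    have hQ : c' * (b' * (c * b)) = w • (ι (x⁻¹ * (y⁻¹ * (x * y))) * eIdem L φ) := by
      have h7 := congrArg (fun t => ι (x⁻¹ * (y⁻¹ * (x * y))) * t) heqw'
      rw [← mul_assoc, ← ι_mul,
        show (x⁻¹ * (y⁻¹ * (x * y))) * (y⁻¹ * (x⁻¹ * (y * x))) = 1 by group,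
        ι_one, one_mul, mul_smul_comm] at h7
      exact h7
    have h8 := congrArg (fun t => t * (c' * (b' * (c * b)))) heq
    simp only [smul_mul_assoc, mul_assoc] at h8
    rw [hPQ] at h8
    rw [mr (hc.2.2.2.1).2] at h8
    rw [hQ, smul_smul] at h8
    have hne : ι (x⁻¹ * (y⁻¹ * (x * y))) * eIdem L φ ≠ 0 := by
      intro h0
      apply e_ne_zero L φ hφirr
      have h10 := congrArg (fun t => ι (x⁻¹ * (y⁻¹ * (x * y)))⁻¹ * t) h0
      simpa only [ι_inv_mul_cancel, mul_zero] using h10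
    have h9 : (1 : ℂ) • (ι (x⁻¹ * (y⁻¹ * (x * y))) * eIdem L φ)
        = (z * w) • (ι (x⁻¹ * (y⁻¹ * (x * y))) * eIdem L φ) := by
      rw [one_smul]; exact h8
    exact (smul_cancel hne h9).symm
  · -- (iii)
    intro x y l₁ l₂ hL z hz
    obtain ⟨c, c', b, b', hc, hb, heq⟩ := hz
    simp only [mul_assoc] at heq
    have hN := F_forward hφinv hc hb heq (by group)
    refine ⟨c * ι (↑l₁ : G), ι ((↑l₁ : G))⁻¹ * c', b * ι (↑l₂ : G), ι ((↑l₂ : G))⁻¹ * b',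
      induces_mul_l hφinv hc l₁, induces_mul_l hφinv hb l₂, ?_⟩
    have hNnew : ι (x * ↑l₁) * ((ι ((↑l₁ : G))⁻¹ * c') * (ι (y * ↑l₂) * ((ι ((↑l₂ : G))⁻¹ * b') *
        ((c * ι (↑l₁ : G)) * (ι (x * ↑l₁)⁻¹ * ((b * ι (↑l₂ : G)) * ι (y * ↑l₂)⁻¹))))))
        = z • eIdem L φ := by
      rw [← hN]
      simp only [mul_inv_rev, ι_mul, mul_assoc, ι_mul_inv_cancel, ι_inv_mul_cancel]
    have hfb := F_backward hφinv (induces_mul_l hφinv hc l₁) (induces_mul_l hφinv hb l₂)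
      hNnew rfl
    simp only [mul_assoc] at hfb ⊢
    exact hfb
  · -- (iv)
    intro x y g hL z hz
    obtain ⟨c, c', b, b', hc, hb, heq⟩ := hz
    simp only [mul_assoc] at heq
    have hN := F_forward hφinv hc hb heq (by group)
    refine ⟨ι g⁻¹ * c * ι g, ι g⁻¹ * c' * ι g, ι g⁻¹ * b * ι g, ι g⁻¹ * b' * ι g,
      induces_conj hφinv hc g, induces_conj hφinv hb g, ?_⟩
    have hNnew : ι (g⁻¹ * x * g) * ((ι g⁻¹ * c' * ι g) * (ι (g⁻¹ * y * g) *
        ((ι g⁻¹ * b' * ι g) * ((ι g⁻¹ * c * ι g) * (ι (g⁻¹ * x * g)⁻¹ *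
        ((ι g⁻¹ * b * ι g) * ι (g⁻¹ * y * g)⁻¹)))))) = z • eIdem L φ := by
      have hre : ι (g⁻¹ * x * g) * ((ι g⁻¹ * c' * ι g) * (ι (g⁻¹ * y * g) *
          ((ι g⁻¹ * b' * ι g) * ((ι g⁻¹ * c * ι g) * (ι (g⁻¹ * x * g)⁻¹ *
          ((ι g⁻¹ * b * ι g) * ι (g⁻¹ * y * g)⁻¹))))))
          = ι g⁻¹ * ((ι x * (c' * (ι y * (b' * (c * (ι x⁻¹ * (b * ι y⁻¹))))))) * ι g) := by
        simp only [mul_inv_rev, inv_inv, ι_mul, mul_assoc, ι_mul_inv_cancel, ι_inv_mul_cancel]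
      rw [hre, hN, smul_mul_assoc, mul_smul_comm, ← e_comm hφinv, ι_inv_mul_cancel]
    have hfb := F_backward hφinv (induces_conj hφinv hc g) (induces_conj hφinv hb g) hNnew rfl
    simp only [mul_assoc] at hfb ⊢
    exact hfb
end
end

section
/- Let L ⊴ G, φ ∈ Irr(L) invariant in G, L ≤ K ≤ G with K ⊴ G, and g ∈ G. If g^m is K-φ-good for some integer m coprime to |K/L|, then g is K-φ-good. -/
open MonoidAlgebra Finset
open scoped Classical

noncomputable section

open CF

namespace Aux
open CF
variable {G : Type} [Group G] [Fintype G] {L : Subgroup G} {φ : ↥L → ℂ}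

theorem conj_e [hN : L.Normal] (hφ : Invariant L φ) (x : G) :
    ι x * eIdem L φ * ι x⁻¹ = eIdem L φ := by
  unfold eIdem
  rw [mul_smul_comm, smul_mul_assoc]
  congr 1
  rw [Finset.mul_sum, Finset.sum_mul]
  have key : ∀ l : L, (ι x : MonoidAlgebra ℂ G) * MonoidAlgebra.single (l:G) (φ l⁻¹) * ι x⁻¹
      = MonoidAlgebra.single (x * (l:G) * x⁻¹) (φ l⁻¹) := by
    intro l
    simp [ι, MonoidAlgebra.single_mul_single]
  simp only [key]
  let σ : ↥L ≃ ↥L :=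
    { toFun := fun l => ⟨x * (l:G) * x⁻¹, hN.conj_mem (l:G) l.2 x⟩
      invFun := fun l => ⟨x⁻¹ * (l:G) * x, by simpa [mul_assoc] using hN.conj_mem (l:G) l.2 x⁻¹⟩
      left_inv := fun l => by ext; simp [mul_assoc]
      right_inv := fun l => by ext; simp [mul_assoc] }
  refine Fintype.sum_equiv σ _ _ ?_
  intro l
  have h1 : ((σ l : L) : G) = x * (l:G) * x⁻¹ := rfl
  rw [h1]
  congr 1
  have h2 : (σ l)⁻¹ = ⟨x * ((l:G))⁻¹ * x⁻¹, by
      simpa using hN.conj_mem ((l:G))⁻¹ (L.inv_mem l.2) x⟩ := by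
    ext; simp [σ, mul_assoc]
  rw [h2]
  have h3 := hφ x⁻¹ l⁻¹
  simp only [inv_inv] at h3
  exact h3.symm

end Aux
namespace Aux
open CF
variable {G : Type} [Group G] [Fintype G] {L : Subgroup G} {φ : ↥L → ℂ}

theorem iota_mul (a b : G) : (ι a : MonoidAlgebra ℂ G) * ι b = ι (a*b) := by
  simp [ι, MonoidAlgebra.single_mul_single]
theorem iota_one : (ι 1 : MonoidAlgebra ℂ G) = 1 := by
  simp [ι, MonoidAlgebra.one_def]
theorem iota_inv_mul (a : G) : (ι a⁻¹ : MonoidAlgebra ℂ G) * ι a = 1 := by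
  rw [iota_mul]; simp [iota_one]
theorem iota_mul_inv (a : G) : (ι a : MonoidAlgebra ℂ G) * ι a⁻¹ = 1 := by
  rw [iota_mul]; simp [iota_one]
theorem iota_pow (a : G) (k : ℕ) : (ι (a^k) : MonoidAlgebra ℂ G) = (ι a)^k := by
  induction k with
  | zero => simp [iota_one]
  | succ n ih => rw [pow_succ, pow_succ, ← ih, iota_mul]

theorem suppIn_mul {a b : MonoidAlgebra ℂ G} (ha : SuppIn L a) (hb : SuppIn L b) :
    SuppIn L (a*b) := by
  intro g hg
  by_contra h
  have hsupp : g ∈ (a*b).coeff.support := Finsupp.mem_support_iff.mpr h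
  have := MonoidAlgebra.support_coeff_mul_subset a b hsupp
  rw [Finset.mem_mul] at this
  obtain ⟨s, hs, t, ht, rfl⟩ := this
  have hsL : s ∈ L := by by_contra hh; simp [Finsupp.mem_support_iff, ha s hh] at hs
  have htL : t ∈ L := by by_contra hh; simp [Finsupp.mem_support_iff, hb t hh] at ht
  exact hg (L.mul_mem hsL htL)

theorem suppIn_iota {x : G} (hx : x ∈ L) : SuppIn L (ι x : MonoidAlgebra ℂ G) := by
  intro g hg
  have : g ≠ x := fun h => hg (h ▸ hx)
  simp [ι, MonoidAlgebra.coeff_single, Finsupp.single_apply, Ne.symm this]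

theorem suppIn_one : SuppIn L (1 : MonoidAlgebra ℂ G) := by
  rw [← iota_one]; exact suppIn_iota (L.one_mem)

theorem suppIn_pow {a : MonoidAlgebra ℂ G} (ha : SuppIn L a) (k : ℕ) : SuppIn L (a^k) := by
  induction k with
  | zero => simpa using (suppIn_one (L := L))
  | succ n ih => rw [pow_succ]; exact suppIn_mul ih ha

theorem inCorner_mul {a b : MonoidAlgebra ℂ G} (ha : InCorner L φ a) (hb : InCorner L φ b) :
    InCorner L φ (a*b) := ⟨by rw [mul_assoc, hb.1], by rw [← mul_assoc, ha.2]⟩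

theorem inCorner_pow {a : MonoidAlgebra ℂ G} (ha : InCorner L φ a) {k : ℕ} (hk : 1 ≤ k) :
    InCorner L φ (a^k) := by
  induction k with
  | zero => omega
  | succ n ih =>
    rcases Nat.eq_or_lt_of_le hk with h | h
    · simpa [← h] using ha
    · rw [pow_succ]; exact inCorner_mul (ih (by omega)) ha

variable {x : G} {cx cx' : MonoidAlgebra ℂ G}

theorem e_idem (hx : Induces L φ x cx cx') :
    eIdem L φ * eIdem L φ = eIdem L φ := by
  calc eIdem L φ * eIdem L φ = cx * cx' * eIdem L φ := by rw [hx.2.2.2.2.1]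
  _ = cx * (cx' * eIdem L φ) := by rw [mul_assoc]
  _ = cx * cx' := by rw [hx.2.2.2.1.1]
  _ = eIdem L φ := hx.2.2.2.2.1

theorem e_pow (hx : Induces L φ x cx cx') {k : ℕ} (hk : 1 ≤ k) :
    (eIdem L φ)^k = eIdem L φ := by
  induction k with
  | zero => omega
  | succ n ih =>
    rcases Nat.eq_or_lt_of_le hk with h | h
    · simp [← h]
    · rw [pow_succ, ih (by omega), e_idem hx]

theorem ind_comm_iota (hx : Induces L φ x cx cx') : ι x * cx = cx * ι x := by
  have h := hx.2.2.2.2.2.2 cx hx.1 hx.2.2.1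
  rw [mul_assoc, hx.2.2.2.2.2.1, hx.2.2.1.2] at h
  -- h : ι x⁻¹ * (cx * ι x) = cx
  have h2 : ι x * (ι x⁻¹ * (cx * ι x)) = ι x * cx := by rw [h]
  rw [← mul_assoc, iota_mul_inv, one_mul] at h2
  -- h2 : cx * ι x = ι x * cx
  exact h2.symm

theorem ind_comm_iota' (hx : Induces L φ x cx cx') : ι x * cx' = cx' * ι x := by
  have h := hx.2.2.2.2.2.2 cx' hx.2.1 hx.2.2.2.1
  rw [mul_assoc cx' cx' cx, hx.2.2.2.2.2.1, hx.2.2.2.1.1, mul_assoc] at h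
  -- h : ι x⁻¹ * (cx' * ι x) = cx'
  have h2 : ι x * (ι x⁻¹ * (cx' * ι x)) = ι x * cx' := by rw [h]
  rw [← mul_assoc, iota_mul_inv, one_mul] at h2
  exact h2.symm

theorem comm_iota_inv {a : MonoidAlgebra ℂ G} (h : ι x * a = a * ι x) :
    ι x⁻¹ * a = a * ι x⁻¹ := by
  have h2 : ι x⁻¹ * (ι x * a) * ι x⁻¹ = ι x⁻¹ * (a * ι x) * ι x⁻¹ := by rw [h]
  rw [← mul_assoc, iota_inv_mul, one_mul] at h2
  rw [mul_assoc, mul_assoc, iota_mul_inv, mul_one] at h2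
  exact h2.symm

/-- e commutes with every ι x (needs invariance). -/
theorem comm_e_iota [L.Normal] (hφ : Invariant L φ) (w : G) :
    ι w * eIdem L φ = eIdem L φ * ι w := by
  have h := conj_e (φ := φ) hφ w
  have h2 : ι w * eIdem L φ * ι w⁻¹ * ι w = eIdem L φ * ι w := by rw [h]
  rw [mul_assoc (ι w * eIdem L φ), iota_inv_mul, mul_one] at h2
  exact h2

theorem conj_e' [L.Normal] (hφ : Invariant L φ) (w : G) :
    ι w⁻¹ * eIdem L φ * ι w = eIdem L φ := by
  have := conj_e (φ := φ) hφ w⁻¹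
  simpa using this

-- abbreviations: u = ι x * cx', v = cx * ι x⁻¹
theorem ind_vu (hx : Induces L φ x cx cx') :
    (cx * ι x⁻¹) * (ι x * cx') = eIdem L φ := by
  rw [mul_assoc, ← mul_assoc (ι x⁻¹), iota_inv_mul, one_mul, hx.2.2.2.2.1]

theorem ind_uv [L.Normal] (hφ : Invariant L φ) (hx : Induces L φ x cx cx') :
    (ι x * cx') * (cx * ι x⁻¹) = eIdem L φ := by
  rw [mul_assoc, ← mul_assoc cx', hx.2.2.2.2.2.1, ← mul_assoc]
  exact conj_e hφ x

theorem u_e (hx : Induces L φ x cx cx') :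
    (ι x * cx') * eIdem L φ = ι x * cx' := by
  rw [mul_assoc, hx.2.2.2.1.1]

theorem e_u [L.Normal] (hφ : Invariant L φ) (hx : Induces L φ x cx cx') :
    eIdem L φ * (ι x * cx') = ι x * cx' := by
  rw [← mul_assoc, ← comm_e_iota hφ x, mul_assoc, hx.2.2.2.1.2]

theorem v_e [L.Normal] (hφ : Invariant L φ) (hx : Induces L φ x cx cx') :
    (cx * ι x⁻¹) * eIdem L φ = cx * ι x⁻¹ := by
  rw [mul_assoc, comm_e_iota hφ x⁻¹, ← mul_assoc, hx.2.2.1.1]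

theorem e_v (hx : Induces L φ x cx cx') :
    eIdem L φ * (cx * ι x⁻¹) = cx * ι x⁻¹ := by
  rw [← mul_assoc, hx.2.2.1.2]

/-- corner elements commute with u. -/
theorem corner_comm_u (hx : Induces L φ x cx cx') {a : MonoidAlgebra ℂ G}
    (hs : SuppIn L a) (hc : InCorner L φ a) :
    a * (ι x * cx') = (ι x * cx') * a := by
  have conj := hx.2.2.2.2.2.2 a hs hc
  refine Eq.symm ?_
  -- (ι x * cx') * a = ι x * (cx' * a * (cx * cx')) = ι x * (ι x⁻¹ * a * ι x) * cx' = a * (ι x * cx')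
  have key : cx' * a = cx' * a * cx * cx' := by
    rw [mul_assoc (cx' * a), hx.2.2.2.2.1, mul_assoc, hc.1]
  calc (ι x * cx') * a = ι x * (cx' * a) := by rw [mul_assoc]
  _ = ι x * (cx' * a * cx * cx') := by rw [← key]
  _ = ι x * ((ι x⁻¹ * a * ι x) * cx') := by rw [← conj, mul_assoc]
  _ = (ι x * ι x⁻¹) * a * (ι x * cx') := by simp only [mul_assoc]
  _ = a * (ι x * cx') := by rw [iota_mul_inv, one_mul]

end Aux
namespace Aux
open CF
variable {G : Type} [Group G] [Fintype G] {L : Subgroup G} {φ : ↥L → ℂ}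
variable {x : G} {cx cx' : MonoidAlgebra ℂ G}

/-- corner elements commute with v. -/
theorem corner_comm_v (hx : Induces L φ x cx cx') {a : MonoidAlgebra ℂ G}
    (hs : SuppIn L a) (hc : InCorner L φ a) :
    a * (cx * ι x⁻¹) = (cx * ι x⁻¹) * a := by
  have conj := hx.2.2.2.2.2.2 a hs hc
  refine Eq.symm ?_
  -- v * a = cx * (ι x⁻¹ * a * ι x) * ι x⁻¹ = cx * (cx' * a * cx) * ι x⁻¹ = a * (cx * ι x⁻¹)
  calc (cx * ι x⁻¹) * a = cx * (ι x⁻¹ * a * (ι x * ι x⁻¹)) := by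
        rw [iota_mul_inv, mul_one, mul_assoc]
  _ = cx * ((ι x⁻¹ * a * ι x) * ι x⁻¹) := by simp only [mul_assoc]
  _ = cx * ((cx' * a * cx) * ι x⁻¹) := by rw [conj]
  _ = (cx * cx') * a * (cx * ι x⁻¹) := by simp only [mul_assoc]
  _ = eIdem L φ * a * (cx * ι x⁻¹) := by rw [hx.2.2.2.2.1]
  _ = a * (cx * ι x⁻¹) := by rw [hc.2]

theorem u_pow (hx : Induces L φ x cx cx') (k : ℕ) :
    (ι x * cx')^k = ι (x^k) * cx'^k := by
  have hcomm : Commute (ι x : MonoidAlgebra ℂ G) cx' := ind_comm_iota' hx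
  rw [hcomm.mul_pow, iota_pow]

theorem v_pow (hx : Induces L φ x cx cx') (k : ℕ) :
    (cx * ι x⁻¹)^k = cx^k * ι ((x^k)⁻¹) := by
  have hcomm : Commute cx (ι x⁻¹ : MonoidAlgebra ℂ G) :=
    (comm_iota_inv (ind_comm_iota hx)).symm
  rw [hcomm.mul_pow, ← iota_pow, inv_pow]

theorem corner_comm_u_pow (hx : Induces L φ x cx cx') {a : MonoidAlgebra ℂ G}
    (hs : SuppIn L a) (hc : InCorner L φ a) (k : ℕ) :
    a * (ι x * cx')^k = (ι x * cx')^k * a := by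
  have h : Commute a (ι x * cx') := corner_comm_u hx hs hc
  exact h.pow_right k

theorem corner_comm_v_pow (hx : Induces L φ x cx cx') {a : MonoidAlgebra ℂ G}
    (hs : SuppIn L a) (hc : InCorner L φ a) (k : ℕ) :
    a * (cx * ι x⁻¹)^k = (cx * ι x⁻¹)^k * a := by
  have h : Commute a (cx * ι x⁻¹) := corner_comm_v hx hs hc
  exact h.pow_right k

theorem uv_pow [L.Normal] (hφ : Invariant L φ) (hx : Induces L φ x cx cx')
    {k : ℕ} (hk : 1 ≤ k) :
    (ι x * cx')^k * (cx * ι x⁻¹)^k = eIdem L φ := by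
  have hcomm : Commute (ι x * cx') (cx * ι x⁻¹ : MonoidAlgebra ℂ G) :=
    by rw [Commute, SemiconjBy, ind_uv hφ hx, ind_vu hx]
  rw [← hcomm.mul_pow, ind_uv hφ hx, e_pow hx hk]

theorem vu_pow [L.Normal] (hφ : Invariant L φ) (hx : Induces L φ x cx cx')
    {k : ℕ} (hk : 1 ≤ k) :
    (cx * ι x⁻¹)^k * (ι x * cx')^k = eIdem L φ := by
  have hcomm : Commute (cx * ι x⁻¹) (ι x * cx' : MonoidAlgebra ℂ G) :=
    by rw [Commute, SemiconjBy, ind_uv hφ hx, ind_vu hx]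
  rw [← hcomm.mul_pow, ind_vu hx, e_pow hx hk]

/-- powers of an inducing pair induce powers of the element -/
theorem ind_pow [L.Normal] (hφ : Invariant L φ) (hx : Induces L φ x cx cx')
    {k : ℕ} (hk : 1 ≤ k) :
    Induces L φ (x^k) (cx^k) (cx'^k) := by
  obtain ⟨hs, hs', hc, hc', hcc', hc'c, hconj⟩ := hx
  refine ⟨suppIn_pow hs k, suppIn_pow hs' k, inCorner_pow hc hk, inCorner_pow hc' hk, ?_, ?_, ?_⟩
  · have hcomm : Commute cx cx' := by rw [Commute, SemiconjBy, hcc', hc'c]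
    rw [← hcomm.mul_pow, hcc']
    exact e_pow ⟨hs, hs', hc, hc', hcc', hc'c, hconj⟩ hk
  · have hcomm : Commute cx' cx := by rw [Commute, SemiconjBy, hcc', hc'c]
    rw [← hcomm.mul_pow, hc'c]
    exact e_pow ⟨hs, hs', hc, hc', hcc', hc'c, hconj⟩ hk
  · intro a has hac
    have hx' : Induces L φ x cx cx' := ⟨hs, hs', hc, hc', hcc', hc'c, hconj⟩
    -- cx'^k * a * cx^k = ι (x^k)⁻¹ * (u^k * a * v^k) * ι (x^k) with u^k a v^k = a
    have h1 : cx'^k = ι ((x^k)⁻¹) * ((ι x * cx')^k) := by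
      rw [u_pow hx' k, ← mul_assoc, iota_inv_mul, one_mul]
    have h2 : cx^k = ((cx * ι x⁻¹)^k) * ι (x^k) := by
      rw [v_pow hx' k, mul_assoc, iota_inv_mul, mul_one]
    have h3 : (ι x * cx')^k * a * (cx * ι x⁻¹)^k = a := by
      rw [← corner_comm_u_pow hx' has hac k, mul_assoc,
        uv_pow hφ hx' hk, hac.1]
    rw [h1, h2]
    refine Eq.symm ?_
    calc ι ((x^k)⁻¹) * ((ι x * cx')^k) * a * ((cx * ι x⁻¹)^k * ι (x^k))
        = ι ((x^k)⁻¹) * ((ι x * cx')^k * a * (cx * ι x⁻¹)^k) * ι (x^k) := by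
          simp only [mul_assoc]
    _ = ι ((x^k)⁻¹) * a * ι (x^k) := by rw [h3]

end Aux
namespace Aux
open CF
variable {G : Type} [Group G] [Fintype G] {L : Subgroup G} {φ : ↥L → ℂ}
variable {x y : G} {cx cx' cy cy' : MonoidAlgebra ℂ G}

theorem nf (hx : Induces L φ x cx cx') (hy : Induces L φ y cy cy') :
    ι (x⁻¹ * y⁻¹ * x * y) * (cy' * cx' * cy * cx)
      = (cx * ι x⁻¹) * ((cy * ι y⁻¹) * ((ι x * cx') * (ι y * cy'))) := by
  have hsQ : SuppIn L (cy * cx) := suppIn_mul hy.1 hx.1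
  have hcQ : InCorner L φ (cy * cx) := inCorner_mul hy.2.2.1 hx.2.2.1
  have hsP : SuppIn L (cx' * (cy * cx)) := suppIn_mul hx.2.1 hsQ
  have hcP : InCorner L φ (cx' * (cy * cx)) := inCorner_mul hx.2.2.2.1 hcQ
  have b1 : ι y * (cy' * (cx' * (cy * cx))) = cx' * (cy * (cx * (ι y * cy'))) := by
    simpa only [mul_assoc] using (corner_comm_u hy hsP hcP).symm
  have b2 : ∀ t : MonoidAlgebra ℂ G,
      ι x * (cx' * (cy * (cx * t))) = cy * (cx * (ι x * (cx' * t))) := fun t => by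
    simpa only [mul_assoc] using congrArg (· * t) (corner_comm_u hx hsQ hcQ).symm
  have b3 : ∀ t : MonoidAlgebra ℂ G, ι y⁻¹ * (cy * t) = cy * (ι y⁻¹ * t) := fun t => by
    rw [← mul_assoc, comm_iota_inv (ind_comm_iota hy), mul_assoc]
  have b4 : ∀ t : MonoidAlgebra ℂ G,
      cy * (ι y⁻¹ * (cx * t)) = cx * (cy * (ι y⁻¹ * t)) := fun t => by
    simpa only [mul_assoc] using congrArg (· * t) (corner_comm_v hy hx.1 hx.2.2.1).symm
  have b5 : ∀ t : MonoidAlgebra ℂ G, ι x⁻¹ * (cx * t) = cx * (ι x⁻¹ * t) := fun t => by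
    rw [← mul_assoc, comm_iota_inv (ind_comm_iota hx), mul_assoc]
  simp only [← iota_mul, mul_assoc]
  rw [b1, b2, b3, b4, b5]

theorem comm_rel [L.Normal] (hφ : Invariant L φ) (hx : Induces L φ x cx cx')
    (hy : Induces L φ y cy cy') {z : ℂ}
    (heq : ι (x⁻¹ * y⁻¹ * x * y) * (cy' * cx' * cy * cx) = z • eIdem L φ) :
    (cy * ι y⁻¹) * (ι x * cx') = z • ((ι x * cx') * (cy * ι y⁻¹)) := by
  have h0 : (cx * ι x⁻¹) * ((cy * ι y⁻¹) * ((ι x * cx') * (ι y * cy'))) = z • eIdem L φ := by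
    rw [← nf hx hy]; exact heq
  have h1 := congrArg (· * (cy * ι y⁻¹)) h0
  simp only [smul_mul_assoc, mul_assoc] at h1
  rw [show ι y * (cy' * (cy * ι y⁻¹)) = eIdem L φ from by
        simpa only [mul_assoc] using ind_uv hφ hy,
      hx.2.2.2.1.1, e_v hy] at h1
  -- h1 : cx * (ι x⁻¹ * (cy * (ι y⁻¹ * (ι x * cx')))) = z • (cy * ι y⁻¹)
  have h2 := congrArg ((ι x * cx') * ·) h1
  simp only [mul_smul_comm, mul_assoc] at h2
  rw [show ∀ t : MonoidAlgebra ℂ G, ι x * (cx' * (cx * (ι x⁻¹ * t))) = eIdem L φ * t from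
        fun t => by simpa only [mul_assoc] using congrArg (· * t) (ind_uv hφ hx),
      ← mul_assoc, hy.2.2.1.2] at h2
  simpa only [mul_assoc] using h2

theorem rel_Vpow {v u : MonoidAlgebra ℂ G} {z : ℂ} (h : v * u = z • (u * v)) (k : ℕ) :
    v^k * u = z^k • (u * v^k) := by
  induction k with
  | zero => simp
  | succ n ih =>
    calc v^(n+1) * u = v^n * (v * u) := by rw [pow_succ, mul_assoc]
    _ = v^n * (z • (u * v)) := by rw [h]
    _ = z • (v^n * u * v) := by rw [mul_smul_comm, mul_assoc]
    _ = z • ((z^n • (u * v^n)) * v) := by rw [ih]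
    _ = (z * z^n) • (u * (v^n * v)) := by rw [smul_mul_assoc, smul_smul, mul_assoc]
    _ = z^(n+1) • (u * v^(n+1)) := by rw [← pow_succ', ← pow_succ]

theorem rel_Upow {v u : MonoidAlgebra ℂ G} {z : ℂ} (h : v * u = z • (u * v)) (k : ℕ) :
    v * u^k = z^k • (u^k * v) := by
  induction k with
  | zero => simp
  | succ n ih =>
    calc v * u^(n+1) = (v * u) * u^n := by rw [pow_succ', ← mul_assoc]
    _ = (z • (u * v)) * u^n := by rw [h]
    _ = z • (u * (v * u^n)) := by rw [smul_mul_assoc, mul_assoc]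
    _ = z • (u * (z^n • (u^n * v))) := by rw [ih]
    _ = (z * z^n) • (u * (u^n * v)) := by rw [mul_smul_comm, smul_smul]
    _ = z^(n+1) • (u^(n+1) * v) := by rw [← mul_assoc, ← pow_succ', ← pow_succ']

theorem dade_pow_right [L.Normal] (hφ : Invariant L φ) (hx : Induces L φ x cx cx')
    (hy : Induces L φ y cy cy') {z : ℂ}
    (heq : ι (x⁻¹ * y⁻¹ * x * y) * (cy' * cx' * cy * cx) = z • eIdem L φ)
    {k : ℕ} (hk : 1 ≤ k) :
    ι (x⁻¹ * (y^k)⁻¹ * x * y^k) * (cy'^k * cx' * cy^k * cx) = z^k • eIdem L φ := by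
  have hyk := ind_pow hφ hy hk
  rw [nf hx hyk, ← v_pow hy k, ← u_pow hy k]
  have h1 := rel_Vpow (comm_rel hφ hx hy heq) k
  calc (cx * ι x⁻¹) * ((cy*ι y⁻¹)^k * ((ι x*cx') * (ι y*cy')^k))
      = (cx * ι x⁻¹) * (((cy*ι y⁻¹)^k * (ι x*cx')) * (ι y*cy')^k) := by
        simp only [mul_assoc]
  _ = (cx * ι x⁻¹) * ((z^k • ((ι x*cx') * (cy*ι y⁻¹)^k)) * (ι y*cy')^k) := by rw [h1]
  _ = z^k • ((cx * ι x⁻¹) * ((ι x*cx') * ((cy*ι y⁻¹)^k * (ι y*cy')^k))) := by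
        rw [smul_mul_assoc, mul_smul_comm]; simp only [mul_assoc]
  _ = z^k • ((cx * ι x⁻¹) * ((ι x*cx') * eIdem L φ)) := by rw [vu_pow hφ hy hk]
  _ = z^k • eIdem L φ := by rw [u_e hx, ind_vu hx]

theorem z_pow_eq_one [L.Normal] (hφ : Invariant L φ) (hx : Induces L φ x cx cx')
    (hy : Induces L φ y cy cy') {z : ℂ}
    (heq : ι (x⁻¹ * y⁻¹ * x * y) * (cy' * cx' * cy * cx) = z • eIdem L φ)
    {n : ℕ} (hn : 1 ≤ n) (hxn : x^n ∈ L) (he : eIdem L φ ≠ 0) : z^n = 1 := by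
  have h1 := rel_Upow (comm_rel hφ hx hy heq) n
  have hsU : SuppIn L ((ι x * cx')^n) := by
    rw [u_pow hx n]; exact suppIn_mul (suppIn_iota hxn) (suppIn_pow hx.2.1 n)
  have hcU : InCorner L φ ((ι x * cx')^n) := inCorner_pow ⟨u_e hx, e_u hφ hx⟩ hn
  have h2 := corner_comm_v hy hsU hcU
  -- h2 : U * v_y = v_y * U ; h1 : v_y * U = z^n • (U * v_y)
  have h3 : (ι x * cx')^n * (cy * ι y⁻¹) = z^n • ((ι x * cx')^n * (cy * ι y⁻¹)) := by
    conv_lhs => rw [h2]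
    exact h1
  have hw : (ι x * cx')^n * (cy * ι y⁻¹) ≠ 0 := by
    intro h
    have hU : (ι x * cx')^n = 0 := by
      have := congrArg (· * (ι y * cy')) h
      simp only [zero_mul, mul_assoc] at this
      rw [show cy * (ι y⁻¹ * (ι y * cy')) = eIdem L φ from by
            simpa only [mul_assoc] using ind_vu hy] at this
      rwa [hcU.1] at this
    have : eIdem L φ = 0 := by
      rw [← vu_pow hφ hx (k := n) hn, hU, mul_zero]
    exact he this
  have h4 : (z^n - 1) • ((ι x * cx')^n * (cy * ι y⁻¹)) = 0 := by
    rw [sub_smul, one_smul, ← h3, sub_self]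
  rcases smul_eq_zero.mp h4 with h | h
  · exact sub_eq_zero.mp h
  · exact absurd h hw

end Aux


/-- `g` is `K`-`φ`-good: `⟨c,g⟩_φ = 1` for all `c ∈ K` with `Lc ∈ C_{K/L}(Lg)`. -/
def KGood {G : Type} [Group G] [Fintype G] (L K : Subgroup G) (φ : ↥L → ℂ) (g : G) : Prop :=
  ∀ c ∈ K, c⁻¹ * g⁻¹ * c * g ∈ L → ∀ z : ℂ, DadeScalar L φ c g z → z = 1

/-- Lemma 2.7 of Ladisch.  If `g^m` is `K`-`φ`-good with `m` coprime
to `|K/L|`, then `g` is `K`-`φ`-good. -/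
theorem stmt3 {G : Type} [Group G] [Fintype G] (L K : Subgroup G) [L.Normal]
    (hLK : L ≤ K) (φ : ↥L → ℂ) (hφirr : IsIrrChar ↥L φ) (hφinv : Invariant L φ)
    (g : G) (m : ℕ) (hcop : Nat.Coprime m (Nat.card K / Nat.card L))
    (hgood : KGood L K φ (g ^ m)) :
    KGood L K φ g := by
  intro c hcK hcl z hz
  obtain ⟨cx, cx', cy, cy', hx, hy, heq⟩ := hz
  by_cases he : eIdem L φ = 0
  · -- degenerate case: hypothesis `hgood` is contradictory
    exfalso
    have hInd : ∀ w : G, Induces L φ w 0 0 := by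
      intro w
      refine ⟨fun g hg => rfl, fun g hg => rfl, ⟨zero_mul _, mul_zero _⟩,
        ⟨zero_mul _, mul_zero _⟩, by rw [mul_zero, he], by rw [mul_zero, he], ?_⟩
      intro a hs hc
      have ha : a = 0 := by rw [← hc.1, he, mul_zero]
      simp [ha]
    have h2 : DadeScalar L φ 1 (g^m) 2 := ⟨0, 0, 0, 0, hInd 1, hInd (g^m), by simp [he]⟩
    have h3 := hgood 1 K.one_mem (by simpa using L.one_mem) 2 h2
    norm_num at h3
  · set n := Nat.card K / Nat.card L with hn
    -- commutativity of c and g in G/L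
    have hcg : ((c : G ⧸ L)) * ((g : G ⧸ L)) = ((g : G ⧸ L)) * ((c : G ⧸ L)) := by
      have h1 : ((c⁻¹ * g⁻¹ * c * g : G) : G ⧸ L) = 1 := (QuotientGroup.eq_one_iff _).mpr hcl
      have h2 : ((g : G ⧸ L) * c) * ((c : G ⧸ L)⁻¹ * (g : G ⧸ L)⁻¹ * c * g)
          = (g : G ⧸ L) * c := by
        simp only [QuotientGroup.mk_mul, QuotientGroup.mk_inv] at h1
        rw [h1, mul_one]
      simpa [mul_assoc] using h2
    -- z ^ m = 1
    have hzm : z ^ m = 1 := by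
      rcases Nat.eq_zero_or_pos m with hm | hm
      · simp [hm]
      · have hyk := Aux.ind_pow hφinv hy hm
        have hD : DadeScalar L φ c (g^m) (z^m) :=
          ⟨cx, cx', cy^m, cy'^m, hx, hyk, Aux.dade_pow_right hφinv hx hy heq hm⟩
        have hcomm : c⁻¹ * (g^m)⁻¹ * c * g^m ∈ L := by
          rw [← QuotientGroup.eq_one_iff]
          have hc2 : ((c : G ⧸ L)) * ((g : G ⧸ L))^m = ((g : G ⧸ L))^m * ((c : G ⧸ L)) := by
            have hcomm2 : Commute ((c : G ⧸ L)) ((g : G ⧸ L)) := hcg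
            exact hcomm2.pow_right m
          simp only [QuotientGroup.mk_mul, QuotientGroup.mk_inv, QuotientGroup.mk_pow]
          rw [mul_assoc, mul_assoc, hc2]
          simp
        exact hgood c hcK hcomm _ hD
    -- c ^ n ∈ L and n ≥ 1
    have hLfin : Nat.card (↥L) ≠ 0 := Nat.card_pos.ne'
    have hcardL : Nat.card (L.subgroupOf K) = Nat.card L :=
      Nat.card_congr (Subgroup.subgroupOfEquivOfLe hLK).toEquiv
    have hcardK := Subgroup.card_eq_card_quotient_mul_card_subgroup (L.subgroupOf K)
    have hnq : n = Nat.card (K ⧸ L.subgroupOf K) := by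
      rw [hn, hcardK, hcardL, Nat.mul_div_cancel]
      exact Nat.pos_of_ne_zero hLfin
    have hn1 : 1 ≤ n := by
      rw [hnq]
      exact Nat.card_pos
    have hcnL : c ^ n ∈ L := by
      have h1 : ((⟨c, hcK⟩ : K) : K ⧸ L.subgroupOf K) ^ n = 1 := by
        rw [hnq]; exact pow_card_eq_one'
      rw [← QuotientGroup.mk_pow, QuotientGroup.eq_one_iff] at h1
      have h2 : ((⟨c, hcK⟩ : K) ^ n : K) ∈ L.subgroupOf K := h1
      rw [Subgroup.mem_subgroupOf] at h2
      simpa using h2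
    have hzn : z ^ n = 1 := Aux.z_pow_eq_one hφinv hx hy heq hn1 hcnL he
    -- conclude
    have hd1 : orderOf z ∣ m := orderOf_dvd_of_pow_eq_one hzm
    have hd2 : orderOf z ∣ n := orderOf_dvd_of_pow_eq_one hzn
    have hd : orderOf z ∣ 1 := by
      have := Nat.dvd_gcd hd1 hd2
      rwa [Nat.Coprime.gcd_eq_one hcop] at this
    exact orderOf_eq_one_iff.mp (Nat.dvd_one.mp hd)
end
end
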